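/- The function u(x,y,z,t) = (x²+y²)² + 16z² + 12(x²+y²)t + 12t² satisfies, at every point (p,t) ∈ ℍ × ℝ, the identity ∂_t u · |∇_H u|² = Δ_H u · |∇_H u|² − ⟨(∇_H²u)* ∇_H u, ∇_H u⟩; consequently, at every point where ∇_H u ≠ 0, u is a classical solution of the level-set horizontal mean curvature flow equation u_t = |∇_H u| · div_H(∇_H u / |∇_H u|). -/

import Mathlib

noncomputable section

/-- The Heisenberg group as a set: `ℝ³` with coordinates `(x, y, z)`. -/
abbrev Heis : Type := ℝ × ℝ × ℝ

/-- The Heisenberg group multiplication. -/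
def Hmul (p q : Heis) : Heis :=
  (p.1 + q.1, p.2.1 + q.2.1, p.2.2 + q.2.2 + (p.1 * q.2.1 - q.1 * p.2.1) / 2)

/-- The Heisenberg group inverse. -/
def Hinv (p : Heis) : Heis := (-p.1, -p.2.1, -p.2.2)

/-- The Korányi gauge `|p|_G = ((x² + y²)² + 16 z²)^(1/4)`. -/
def kGauge (p : Heis) : ℝ := ((p.1 ^ 2 + p.2.1 ^ 2) ^ 2 + 16 * p.2.2 ^ 2) ^ ((1 : ℝ) / 4)

/-- The left-invariant gauge metric `d_L(p,q) = |p⁻¹·q|_G`. -/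
def dL (p q : Heis) : ℝ := kGauge (Hmul (Hinv p) q)

/-- The right-invariant gauge metric `d_R(p,q) = |p·q⁻¹|_G`. -/
def dR (p q : Heis) : ℝ := kGauge (Hmul p (Hinv q))

/-- The horizontal vector field `X₁ = ∂ₓ - (y/2)∂_z` applied to `f` at `p`. -/
def X1 (f : Heis → ℝ) (p : Heis) : ℝ := fderiv ℝ f p (1, 0, -p.2.1 / 2)

/-- The horizontal vector field `X₂ = ∂_y + (x/2)∂_z` applied to `f` at `p`. -/
def X2 (f : Heis → ℝ) (p : Heis) : ℝ := fderiv ℝ f p (0, 1, p.1 / 2)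

/-- The horizontal Laplacian `Δ_H f = X₁(X₁ f) + X₂(X₂ f)`. -/
def deltaH (f : Heis → ℝ) (p : Heis) : ℝ := X1 (X1 f) p + X2 (X2 f) p

/-- The Euclidean norm of the horizontal gradient, `|∇_H f|`. -/
def gradNormH (f : Heis → ℝ) (p : Heis) : ℝ := Real.sqrt ((X1 f p) ^ 2 + (X2 f p) ^ 2)

/-- The horizontal divergence of the vector field `(F₁, F₂)`. -/
def divH (F₁ F₂ : Heis → ℝ) (p : Heis) : ℝ := X1 F₁ p + X2 F₂ p

/-- The function `u(x,y,z,t) = (x²+y²)² + 16z² + 12(x²+y²)t + 12t²`. -/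
def u16 (p : Heis) (t : ℝ) : ℝ :=
  (p.1 ^ 2 + p.2.1 ^ 2) ^ 2 + 16 * p.2.2 ^ 2 + 12 * (p.1 ^ 2 + p.2.1 ^ 2) * t + 12 * t ^ 2

/-- `u16(·,t)` viewed as a function of the space variable. -/
def v16 (t : ℝ) (q : Heis) : ℝ := u16 q t

/-! ### Auxiliary machinery -/


def aF (t : ℝ) (q : Heis) : ℝ := 4 * q.1 * (q.1 * q.1 + q.2.1 * q.2.1) + 24 * q.1 * t - 16 * (q.2.1 * q.2.2)
def bF (t : ℝ) (q : Heis) : ℝ := 4 * q.2.1 * (q.1 * q.1 + q.2.1 * q.2.1) + 24 * q.2.1 * t + 16 * (q.1 * q.2.2)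

lemma hx (p : Heis) : HasFDerivAt (fun q : Heis => q.1) (ContinuousLinearMap.fst ℝ ℝ (ℝ × ℝ)) p := hasFDerivAt_fst
lemma hy (p : Heis) : HasFDerivAt (fun q : Heis => q.2.1)
    ((ContinuousLinearMap.fst ℝ ℝ ℝ).comp (ContinuousLinearMap.snd ℝ ℝ (ℝ × ℝ))) p :=
  (hasFDerivAt_snd).fst
lemma hz (p : Heis) : HasFDerivAt (fun q : Heis => q.2.2)
    ((ContinuousLinearMap.snd ℝ ℝ ℝ).comp (ContinuousLinearMap.snd ℝ ℝ (ℝ × ℝ))) p :=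
  (hasFDerivAt_snd).snd

lemma myDiv {f g : Heis → ℝ} {f' g' : Heis →L[ℝ] ℝ} {x : Heis}
    (hf : HasFDerivAt f f' x) (hg : HasFDerivAt g g' x) (hx : g x ≠ 0) :
    HasFDerivAt (fun y => f y / g y)
      ((g x)⁻¹ • f' + (-(f x) * ((g x) * (g x))⁻¹) • g') x := by
  have hinv : HasFDerivAt (fun y : Heis => (g y)⁻¹) ((-(g x ^ 2)⁻¹) • g') x :=
    (hasDerivAt_inv hx).comp_hasFDerivAt x hg
  have h := hf.mul hinv
  simp only [div_eq_mul_inv]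
  refine h.congr_fderiv ?_
  refine ContinuousLinearMap.ext fun v => ?_
  simp only [ContinuousLinearMap.add_apply, ContinuousLinearMap.coe_smul',
    Pi.smul_apply, smul_eq_mul]
  ring

def DaF (t : ℝ) (p : Heis) : Heis →L[ℝ] ℝ :=
  ((4 * p.1) • ((p.1 • ContinuousLinearMap.fst ℝ ℝ (ℝ × ℝ) + p.1 • ContinuousLinearMap.fst ℝ ℝ (ℝ × ℝ))
      + (p.2.1 • ((ContinuousLinearMap.fst ℝ ℝ ℝ).comp (ContinuousLinearMap.snd ℝ ℝ (ℝ × ℝ)))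
        + p.2.1 • ((ContinuousLinearMap.fst ℝ ℝ ℝ).comp (ContinuousLinearMap.snd ℝ ℝ (ℝ × ℝ)))))
    + (p.1 * p.1 + p.2.1 * p.2.1) • ((4:ℝ) • ContinuousLinearMap.fst ℝ ℝ (ℝ × ℝ))
    + t • ((24:ℝ) • ContinuousLinearMap.fst ℝ ℝ (ℝ × ℝ)))
  - (16:ℝ) • (p.2.1 • ((ContinuousLinearMap.snd ℝ ℝ ℝ).comp (ContinuousLinearMap.snd ℝ ℝ (ℝ × ℝ)))
      + p.2.2 • ((ContinuousLinearMap.fst ℝ ℝ ℝ).comp (ContinuousLinearMap.snd ℝ ℝ (ℝ × ℝ))))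

def DbF (t : ℝ) (p : Heis) : Heis →L[ℝ] ℝ :=
  ((4 * p.2.1) • ((p.1 • ContinuousLinearMap.fst ℝ ℝ (ℝ × ℝ) + p.1 • ContinuousLinearMap.fst ℝ ℝ (ℝ × ℝ))
      + (p.2.1 • ((ContinuousLinearMap.fst ℝ ℝ ℝ).comp (ContinuousLinearMap.snd ℝ ℝ (ℝ × ℝ)))
        + p.2.1 • ((ContinuousLinearMap.fst ℝ ℝ ℝ).comp (ContinuousLinearMap.snd ℝ ℝ (ℝ × ℝ)))))
    + (p.1 * p.1 + p.2.1 * p.2.1) • ((4:ℝ) • ((ContinuousLinearMap.fst ℝ ℝ ℝ).comp (ContinuousLinearMap.snd ℝ ℝ (ℝ × ℝ))))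
    + t • ((24:ℝ) • ((ContinuousLinearMap.fst ℝ ℝ ℝ).comp (ContinuousLinearMap.snd ℝ ℝ (ℝ × ℝ)))))
  + (16:ℝ) • (p.1 • ((ContinuousLinearMap.snd ℝ ℝ ℝ).comp (ContinuousLinearMap.snd ℝ ℝ (ℝ × ℝ)))
      + p.2.2 • ContinuousLinearMap.fst ℝ ℝ (ℝ × ℝ))

lemma haD (t : ℝ) (p : Heis) : HasFDerivAt (aF t) (DaF t p) p := by
  have h := ((((hx p).const_mul 4).mul (((hx p).mul (hx p)).add ((hy p).mul (hy p)))).add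
    (((hx p).const_mul 24).mul_const t)).sub (((hy p).mul (hz p)).const_mul 16)
  exact h

lemma hbD (t : ℝ) (p : Heis) : HasFDerivAt (bF t) (DbF t p) p := by
  have h := ((((hy p).const_mul 4).mul (((hx p).mul (hx p)).add ((hy p).mul (hy p)))).add
    (((hy p).const_mul 24).mul_const t)).add (((hx p).mul (hz p)).const_mul 16)
  exact h

lemma X1_v16 (t : ℝ) (p : Heis) : X1 (v16 t) p = aF t p := by
  have hfun : v16 t = fun q : Heis =>
      (q.1*q.1 + q.2.1*q.2.1) * (q.1*q.1 + q.2.1*q.2.1) + 16 * (q.2.2*q.2.2)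
        + 12 * (q.1*q.1 + q.2.1*q.2.1) * t + 12*t^2 := by
    funext q; simp only [v16, u16]; ring
  have hr := ((hx p).mul (hx p)).add ((hy p).mul (hy p))
  have h := (((hr.mul hr).add (((hz p).mul (hz p)).const_mul 16)).add
      ((hr.const_mul 12).mul_const t)).add (hasFDerivAt_const (12*t^2) p)
  rw [X1, hfun]
  erw [h.fderiv]
  simp
  rw [aF]
  ring

lemma X2_v16 (t : ℝ) (p : Heis) : X2 (v16 t) p = bF t p := by
  have hfun : v16 t = fun q : Heis =>
      (q.1*q.1 + q.2.1*q.2.1) * (q.1*q.1 + q.2.1*q.2.1) + 16 * (q.2.2*q.2.2)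
        + 12 * (q.1*q.1 + q.2.1*q.2.1) * t + 12*t^2 := by
    funext q; simp only [v16, u16]; ring
  have hr := ((hx p).mul (hx p)).add ((hy p).mul (hy p))
  have h := (((hr.mul hr).add (((hz p).mul (hz p)).const_mul 16)).add
      ((hr.const_mul 12).mul_const t)).add (hasFDerivAt_const (12*t^2) p)
  rw [X2, hfun]
  erw [h.fderiv]
  simp
  rw [bF]
  ring

lemma X1_aF (t : ℝ) (p : Heis) : X1 (aF t) p = 12*p.1^2 + 12*p.2.1^2 + 24*t := by
  rw [X1, (haD t p).fderiv]; simp [DaF]; ring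

lemma X2_aF (t : ℝ) (p : Heis) : X2 (aF t) p = -16*p.2.2 := by
  rw [X2, (haD t p).fderiv]; simp [DaF]; ring

lemma X1_bF (t : ℝ) (p : Heis) : X1 (bF t) p = 16*p.2.2 := by
  rw [X1, (hbD t p).fderiv]; simp [DbF]; ring

lemma X2_bF (t : ℝ) (p : Heis) : X2 (bF t) p = 12*p.1^2 + 12*p.2.1^2 + 24*t := by
  rw [X2, (hbD t p).fderiv]; simp [DbF]; ring

lemma deriv_u16 (p : Heis) (t : ℝ) :
    deriv (fun s : ℝ => u16 p s) t = 12*p.1^2 + 12*p.2.1^2 + 24*t := by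
  have hfun : (fun s : ℝ => u16 p s)
      = fun s : ℝ => ((p.1^2+p.2.1^2)^2 + 16*p.2.2^2) + (12*(p.1^2+p.2.1^2))*s + 12*(s*s) := by
    funext s; simp only [u16]; ring
  have h : HasDerivAt (fun s : ℝ => ((p.1^2+p.2.1^2)^2 + 16*p.2.2^2) + (12*(p.1^2+p.2.1^2))*s + 12*(s*s))
      (0 + 12*(p.1^2+p.2.1^2)*1 + 12*(1*t + t*1)) t :=
    ((hasDerivAt_const t ((p.1^2+p.2.1^2)^2 + 16*p.2.2^2)).add
      ((hasDerivAt_id t).const_mul (12*(p.1^2+p.2.1^2)))).add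
      (((hasDerivAt_id t).mul (hasDerivAt_id t)).const_mul 12)
  rw [hfun, h.deriv]
  ring



/-- `u16` satisfies `u_t·|∇_H u|² = Δ_H u·|∇_H u|² - ⟨(∇_H²u)* ∇_H u, ∇_H u⟩` everywhere;
hence, wherever `∇_H u ≠ 0`, it solves the level-set horizontal mean curvature flow
equation `u_t = |∇_H u| div_H(∇_H u / |∇_H u|)` classically. -/
theorem u16_solves_horizontal_mcf :
    (∀ p : Heis, ∀ t : ℝ,
      deriv (fun s : ℝ => u16 p s) t * ((X1 (v16 t) p) ^ 2 + (X2 (v16 t) p) ^ 2)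
        = deltaH (v16 t) p * ((X1 (v16 t) p) ^ 2 + (X2 (v16 t) p) ^ 2)
          - (X1 (X1 (v16 t)) p * (X1 (v16 t) p) ^ 2
            + (X1 (X2 (v16 t)) p + X2 (X1 (v16 t)) p) * X1 (v16 t) p * X2 (v16 t) p
            + X2 (X2 (v16 t)) p * (X2 (v16 t) p) ^ 2)) ∧
    (∀ p : Heis, ∀ t : ℝ, (X1 (v16 t) p, X2 (v16 t) p) ≠ (0, 0) →
      deriv (fun s : ℝ => u16 p s) t
        = gradNormH (v16 t) p
          * divH (fun q => X1 (v16 t) q / gradNormH (v16 t) q)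
              (fun q => X2 (v16 t) q / gradNormH (v16 t) q) p) := by
  have e1 : ∀ t, X1 (v16 t) = aF t := fun t => funext (X1_v16 t)
  have e2 : ∀ t, X2 (v16 t) = bF t := fun t => funext (X2_v16 t)
  constructor
  · intro p t
    rw [deriv_u16, deltaH, e1, e2, X1_aF, X2_aF, X1_bF, X2_bF]
    ring
  · intro p t hne
    have hgrad : gradNormH (v16 t) = fun q => Real.sqrt (aF t q * aF t q + bF t q * bF t q) := by
      funext q
      rw [gradNormH, X1_v16, X2_v16, pow_two, pow_two]
    rw [e1, e2] at hne
    have hab : aF t p ≠ 0 ∨ bF t p ≠ 0 := by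
      by_contra h
      push_neg at h
      exact hne (by rw [h.1, h.2])
    have hS : 0 < aF t p * aF t p + bF t p * bF t p := by
      rcases hab with h | h
      · nlinarith [mul_self_pos.2 h, mul_self_nonneg (bF t p)]
      · nlinarith [mul_self_pos.2 h, mul_self_nonneg (aF t p)]
    have hNne : Real.sqrt (aF t p * aF t p + bF t p * bF t p) ≠ 0 :=
      (Real.sqrt_pos.2 hS).ne'
    have eF1 : (fun q => X1 (v16 t) q / gradNormH (v16 t) q)
        = fun q => aF t q / Real.sqrt (aF t q * aF t q + bF t q * bF t q) := by
      simp only [e1, hgrad]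
    have eF2 : (fun q => X2 (v16 t) q / gradNormH (v16 t) q)
        = fun q => bF t q / Real.sqrt (aF t q * aF t q + bF t q * bF t q) := by
      simp only [e2, hgrad]
    have hSD := ((haD t p).mul (haD t p)).add ((hbD t p).mul (hbD t p))
    have hND := hSD.sqrt hS.ne'
    have hF1 := myDiv (haD t p) hND hNne
    have hF2 := myDiv (hbD t p) hND hNne
    rw [deriv_u16, divH, eF1, eF2, hgrad, X1, X2]
    erw [hF1.fderiv, hF2.fderiv]
    simp only [ContinuousLinearMap.add_apply, ContinuousLinearMap.coe_smul',
      Pi.smul_apply, smul_eq_mul, ContinuousLinearMap.comp_apply,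
      ContinuousLinearMap.coe_fst', ContinuousLinearMap.coe_snd',
      ContinuousLinearMap.smul_apply, ContinuousLinearMap.sub_apply, DaF, DbF,
      Pi.add_apply, Pi.mul_apply]
    set a := aF t p with ha
    set b := bF t p with hb
    set N := Real.sqrt (a * a + b * b) with hN
    have hNpos : 0 < N := Real.sqrt_pos.2 hS
    have hN2 : N * N = a * a + b * b := Real.mul_self_sqrt hS.le
    field_simp
    linear_combination (-(48*p.1^2 + 48*p.2.1^2 + 96*t)) * hN2
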